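/- Let l ∈ ℕ ∪ {∞}, let H⃗ and G⃗ be directed acyclic hypergraphs, let T be a DAG-tree decomposition of the l-skeleton Sk_l(H⃗), and let B be a node of T. Fix a DAH homomorphism φ from H⃗[B]_l to G⃗, and for every child B′ of B in T let φ_{B′} be the restriction of φ to Reach_{H⃗,l}(B) ∩ Reach_{H⃗,l}(Γ(B′)). Then ext(φ, H⃗[Γ(B)]_l, G⃗) = Π_{B′ child of B} ext(φ_{B′}, H⃗[Γ(B′)]_l, G⃗). -/

import Mathlib

open scoped Classical

noncomputable section

/-- A hypergraph: a finite vertex set and a finite set of hyperedges, with vertices in `ℕ`. -/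
structure Hypergraph' where
  verts : Finset ℕ
  edges : Finset (Finset ℕ)

namespace Hypergraph'

/-- Well-formedness: every hyperedge is a nonempty subset of the vertex set. -/
def Good (G : Hypergraph') : Prop := ∀ e ∈ G.edges, e ⊆ G.verts ∧ e.Nonempty

/-- The rank of a hypergraph: the maximum arity of a hyperedge. -/
def rank (G : Hypergraph') : ℕ := G.edges.sup Finset.card

/-- The induced `l`-trimmed subhypergraph of `G` on `S`. -/
def trim (G : Hypergraph') (S : Finset ℕ) (l : ℕ∞) : Hypergraph' :=
  ⟨G.verts ∩ S,
    (G.edges.filter fun e => ((e \ S).card : ℕ∞) ≤ l ∧ (e ∩ S).Nonempty).image fun e => e ∩ S⟩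

/-- The degree of a vertex: the number of hyperedges containing it. -/
def degree (G : Hypergraph') (v : ℕ) : ℕ := (G.edges.filter fun e => v ∈ e).card

/-- The `l`-degeneracy of a hypergraph: the least `κ` such that every nonempty induced
`l`-trimmed subhypergraph has a vertex of degree at most `κ`. -/
def degeneracy (G : Hypergraph') (l : ℕ∞) : ℕ :=
  sInf {κ : ℕ | ∀ S ⊆ G.verts, S.Nonempty → ∃ v ∈ S, (G.trim S l).degree v ≤ κ}

/-- Two vertices are adjacent if some hyperedge contains both. -/
def Adj (G : Hypergraph') (u v : ℕ) : Prop := ∃ e ∈ G.edges, u ∈ e ∧ v ∈ e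

/-- A hypergraph is connected if any two vertices are joined by a path of adjacencies. -/
def Connected (G : Hypergraph') : Prop :=
  ∀ u ∈ G.verts, ∀ v ∈ G.verts, Relation.ReflTransGen G.Adj u v

/-- `D` is a connected component of `G`. -/
def IsComponent (G : Hypergraph') (D : Finset ℕ) : Prop :=
  ∃ v ∈ G.verts, D = G.verts.filter fun u => Relation.ReflTransGen G.Adj v u

/-- The induced subhypergraph (only hyperedges entirely inside `S`). -/
def induce (G : Hypergraph') (S : Finset ℕ) : Hypergraph' :=
  ⟨G.verts ∩ S, G.edges.filter fun e => e ⊆ S⟩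

end Hypergraph'

/-- `f` is a homomorphism from `H` to `G`. -/
def IsHom (H G : Hypergraph') (f : ℕ → ℕ) : Prop :=
  (∀ v ∈ H.verts, f v ∈ G.verts) ∧ ∀ e ∈ H.edges, e.image f ∈ G.edges

/-- `Hom(G,H)`: the number of homomorphisms from `H` to `G`
(normalized to be `0` off `V(H)` so that the set is finite). -/
def homCount (G H : Hypergraph') : ℕ :=
  Set.ncard {f : ℕ → ℕ | IsHom H G f ∧ ∀ v ∉ H.verts, f v = 0}

/-- `Homr(G,H)`: the number of arity-preserving homomorphisms from `H` to `G`. -/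
def homrCount (G H : Hypergraph') : ℕ :=
  Set.ncard {f : ℕ → ℕ | IsHom H G f ∧ (∀ e ∈ H.edges, (e.image f).card = e.card) ∧
    ∀ v ∉ H.verts, f v = 0}

/-- Hypergraph' isomorphism. -/
def Isomorphic (H H' : Hypergraph') : Prop :=
  ∃ f : ℕ → ℕ, Set.BijOn f ↑H.verts ↑H'.verts ∧
    H'.edges = H.edges.image fun e => e.image f

/-- The quotient of `H` under the partition of `V(H)` into the fibers of `f`. -/
def quotientBy (H : Hypergraph') (f : ℕ → ℕ) : Hypergraph' :=
  ⟨H.verts.image f, H.edges.image fun e => e.image f⟩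

/-- `H'` is a quotient of `H` (by some partition of `V(H)`). -/
def IsQuotient (H H' : Hypergraph') : Prop := ∃ f : ℕ → ℕ, H' = quotientBy H f

/-- Each fiber of `f` induces a connected (trimmed) subhypergraph of `H`. -/
def ContractMap (H : Hypergraph') (f : ℕ → ℕ) : Prop :=
  ∀ w : ℕ, (H.trim (H.verts.filter fun v => f v = w) ⊤).Connected

/-- `H'` belongs to the contract set `Q^c(H)`: it is a quotient of `H` by a partition
all of whose parts induce connected subhypergraphs of `H`. -/
def IsContractQuotient (H H' : Hypergraph') : Prop :=
  ∃ f : ℕ → ℕ, ContractMap H f ∧ H' = quotientBy H f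

/-- `α(H')`: the number of partitions `τ` of `V(H)` with connected parts with `H/τ ≅ H'`. -/
def alphaCount (H H' : Hypergraph') : ℕ :=
  Set.ncard {P : Finset (Finset ℕ) | ∃ f : ℕ → ℕ, ContractMap H f ∧
    Isomorphic (quotientBy H f) H' ∧
    P = (H.verts.image f).image fun w => H.verts.filter fun v => f v = w}

/-- `|Aut(H')|`: the number of automorphisms of `H'`. -/
def autCount (H' : Hypergraph') : ℕ :=
  Set.ncard {f : ℕ → ℕ | (∀ v ∉ H'.verts, f v = v) ∧ Set.BijOn f ↑H'.verts ↑H'.verts ∧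
    H'.edges.image (fun e => e.image f) = H'.edges}

/-- The arc relation of the `l`-skeleton of the DAH obtained by ordering `G` by `π`. -/
def SkelArc (G : Hypergraph') (π : ℕ → ℕ) (l : ℕ∞) (u v : ℕ) : Prop :=
  ∃ e ∈ G.edges, u ∈ e ∧ v ∈ e ∧ π u < π v ∧
    ((e.filter fun w => π w < π u).card : ℕ∞) ≤ l

/-- The `l`-outdegree of a vertex in the DAH `(G, π)`. -/
def loutdeg (G : Hypergraph') (π : ℕ → ℕ) (l : ℕ∞) (u : ℕ) : ℕ :=
  (G.verts.filter fun v => SkelArc G π l u v).card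

/-- Vertices reachable from `v` by a directed path. -/
def Reach (Adj : ℕ → ℕ → Prop) (v : ℕ) : Set ℕ := {u | Relation.ReflTransGen Adj v u}

/-- Vertices reachable from a set `A`. -/
def ReachSet (Adj : ℕ → ℕ → Prop) (A : Set ℕ) : Set ℕ :=
  {u | ∃ a ∈ A, Relation.ReflTransGen Adj a u}

/-- The sources of a DAG: vertices with no incoming arc. -/
def sourcesOf (V : Finset ℕ) (Adj : ℕ → ℕ → Prop) : Finset ℕ :=
  V.filter fun v => ¬ ∃ u ∈ V, Adj u v

/-- `b` lies on the (unique) path between `i` and `j` in `T`. -/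
def OnPath {n : ℕ} (T : SimpleGraph (Fin n)) (i j b : Fin n) : Prop :=
  ∃ p : T.Walk i j, p.IsPath ∧ b ∈ p.support

/-- `(T, β)` is a DAG-tree decomposition of the DAG `(V, Adj)`. -/
def IsDTD (V : Finset ℕ) (Adj : ℕ → ℕ → Prop) {n : ℕ}
    (T : SimpleGraph (Fin n)) (β : Fin n → Finset ℕ) : Prop :=
  T.IsTree ∧ (∀ i, β i ⊆ sourcesOf V Adj) ∧ (∀ s ∈ sourcesOf V Adj, ∃ i, s ∈ β i) ∧
    ∀ i j b, OnPath T i j b →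
      ReachSet Adj ↑(β i) ∩ ReachSet Adj ↑(β j) ⊆ ReachSet Adj ↑(β b)

/-- The DAG-treewidth of the DAG `(V, Adj)`. -/
def dagTreewidth (V : Finset ℕ) (Adj : ℕ → ℕ → Prop) : ℕ :=
  sInf {w : ℕ | ∃ (n : ℕ) (T : SimpleGraph (Fin n)) (β : Fin n → Finset ℕ),
    IsDTD V Adj T β ∧ ∀ i, (β i).card ≤ w}

/-- The `l`-DAG-treewidth of the DAH `(H, π)`. -/
def ldtwOriented (H : Hypergraph') (π : ℕ → ℕ) (l : ℕ∞) : ℕ :=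
  dagTreewidth H.verts (SkelArc H π l)

/-- The `l`-DAG-treewidth of an undirected hypergraph:
the maximum over all acyclic orientations. -/
def ldtw (H : Hypergraph') (l : ℕ∞) : ℕ :=
  sSup {w : ℕ | ∃ π : ℕ → ℕ, Set.InjOn π ↑H.verts ∧ w = ldtwOriented H π l}

/-- `f` is a DAH homomorphism from `(K, πK)` to `(G, πG)`. -/
def IsDAHHom (K : Hypergraph') (πK : ℕ → ℕ) (G : Hypergraph') (πG : ℕ → ℕ)
    (f : ℕ → ℕ) : Prop :=
  (∀ v ∈ K.verts, f v ∈ G.verts) ∧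
    ∀ e ∈ K.edges, e.image f ∈ G.edges ∧
      ∀ u ∈ e, ∀ v ∈ e, πK u < πK v → πG (f u) < πG (f v)

/-- The number of DAH homomorphisms from `(K, πK)` to `(G, πG)`. -/
def dahHomCount (G : Hypergraph') (πG : ℕ → ℕ) (K : Hypergraph') (πK : ℕ → ℕ) : ℕ :=
  Set.ncard {f : ℕ → ℕ | IsDAHHom K πK G πG f ∧ ∀ v ∉ K.verts, f v = 0}

/-- Two orderings of `H` give isomorphic acyclic orientations. -/
def OrientIso (H : Hypergraph') (π₁ π₂ : ℕ → ℕ) : Prop :=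
  ∃ g : ℕ → ℕ, Set.BijOn g ↑H.verts ↑H.verts ∧
    (H.edges.image fun e => e.image g) = H.edges ∧
    ∀ u ∈ H.verts, ∀ v ∈ H.verts, (π₁ u < π₁ v ↔ π₂ (g u) < π₂ (g v))

/-- The vertices of `H` that are `l`-reachable from the set `S` in the DAH `(H, π)`. -/
def reachClosure (H : Hypergraph') (π : ℕ → ℕ) (l : ℕ∞) (S : Set ℕ) : Finset ℕ :=
  H.verts.filter fun v => v ∈ ReachSet (SkelArc H π l) S

/-- `H⃗[S]_l`: the sub-DAH induced (0-trimmed) on the vertices `l`-reachable from `S`. -/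
def subDAH (H : Hypergraph') (π : ℕ → ℕ) (l : ℕ∞) (S : Set ℕ) : Hypergraph' :=
  H.trim (reachClosure H π l S) 0

/-- `B'` is a child of `B` in the tree `T` rooted at `root`. -/
def IsChild {n : ℕ} (T : SimpleGraph (Fin n)) (root B B' : Fin n) : Prop :=
  T.Adj B B' ∧ OnPath T root B' B

/-- `Γ(B)`: the union of the bags in the subtree of `T` rooted at `B`. -/
def GammaSet {n : ℕ} (T : SimpleGraph (Fin n)) (root : Fin n)
    (β : Fin n → Finset ℕ) (B : Fin n) : Set ℕ :=
  {s | ∃ i, OnPath T root i B ∧ s ∈ β i}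

/-- `ext(φ, K⃗, G⃗)` relative to the agreement domain `dom`: the number of DAH homomorphisms
from `(K, πK)` to `(G, πG)` that agree with `φ` on `V(K) ∩ dom`. -/
def extCount (K : Hypergraph') (πK : ℕ → ℕ) (G : Hypergraph') (πG : ℕ → ℕ)
    (dom : Set ℕ) (φ : ℕ → ℕ) : ℕ :=
  Set.ncard {ψ : ℕ → ℕ | IsDAHHom K πK G πG ψ ∧ (∀ v ∉ K.verts, ψ v = 0) ∧
    ∀ v ∈ (↑K.verts : Set ℕ) ∩ dom, ψ v = φ v}

/-- The hyperedges `E_i` associated to a core `C` and a component `D`. -/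
def obstructionEdges (H : Hypergraph') (C D : Finset ℕ) : Finset (Finset ℕ) :=
  H.edges.filter fun e => e ⊆ C ∪ D ∧ 1 < e.card

/-- `H` is an `l`-obstruction (a member of `𝓗_l`). -/
def IsLObstruction (l : ℕ∞) (H : Hypergraph') : Prop :=
  ∃ k, 3 ≤ k ∧ ∃ C ⊆ H.verts, C.card = k ∧
    (∀ e ∈ (H.trim C l).edges, e.card ≤ 1) ∧
    (∀ D : Finset ℕ, (H.trim (H.verts \ C) ⊤).IsComponent D →
      ¬ C ⊆ (obstructionEdges H C D).biUnion id) ∧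
    ∃ Dmap : ℕ → Finset ℕ, Set.InjOn Dmap ↑C ∧
      ∀ c ∈ C, (H.trim (H.verts \ C) ⊤).IsComponent (Dmap c) ∧
        C.erase c ⊆ (obstructionEdges H C (Dmap c)).biUnion id ∧
        ∀ e ∈ obstructionEdges H C (Dmap c), c ∉ e

/-- `H` is `𝓗_l` ITS free: no induced ∞-trimmed subhypergraph is an `l`-obstruction. -/
def ITSFree (l : ℕ∞) (H : Hypergraph') : Prop :=
  ∀ S ⊆ H.verts, ¬ IsLObstruction l (H.trim S ⊤)

/-- The hypergraph `(Hv, He)` is an `l`-connector of `X ⊆ Hv`. -/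
def IsConnector (l : ℕ∞) (Hv : Finset ℕ) (He : Finset (Finset ℕ)) (X : Finset ℕ) : Prop :=
  X ⊆ Hv ∧ Hypergraph'.Connected ⟨Hv, He⟩ ∧
    (∀ e ∈ He, 2 ≤ (e ∩ X).card → l < ((e \ X).card : ℕ∞)) ∧
    ∃ V' : Finset ℕ, (Hypergraph'.trim ⟨Hv, He⟩ (Hv \ X) ⊤).IsComponent V' ∧
      ∀ xx ∈ X, ∃ v ∈ V', ∃ e ∈ He, xx ∈ e ∧ v ∈ e

/-- Witness data for membership of `H` in `𝓗_{l,k}`. -/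
def InHlkWitness (l : ℕ∞) (k : ℕ) (H : Hypergraph')
    (x : ℕ → ℕ) (Vp : ℕ → Finset ℕ) (Ep : ℕ → Finset (Finset ℕ)) : Prop :=
  Set.InjOn x ↑(Finset.range k) ∧
  (∀ i < k, ∀ j < k, i ≠ j → Disjoint (Vp i) (Vp j)) ∧
  (∀ i < k, Disjoint (Vp i) ((Finset.range k).image x)) ∧
  H.verts = (Finset.range k).image x ∪ (Finset.range k).biUnion Vp ∧
  (∀ i < k, ∀ j < k, i ≠ j → Disjoint (Ep i) (Ep j)) ∧
  H.edges = (Finset.range k).biUnion Ep ∧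
  ∀ i < k,
    (∀ e ∈ Ep i, e ⊆ Vp i ∪ (((Finset.range k).image x).erase (x i))) ∧
    IsConnector l (Vp i ∪ (((Finset.range k).image x).erase (x i))) (Ep i)
      (((Finset.range k).image x).erase (x i))

/-- `H ∈ 𝓗_{l,k}`. -/
def InHlk (l : ℕ∞) (k : ℕ) (H : Hypergraph') : Prop :=
  ∃ x Vp Ep, InHlkWitness l k H x Vp Ep

/-- The DAG `(V, Adj)` contains a `k`-reachable-cycle. -/
def HasReachCycle (V : Finset ℕ) (Adj : ℕ → ℕ → Prop) (k : ℕ) : Prop :=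
  ∃ x y : ZMod k → ℕ, Function.Injective x ∧ Function.Injective y ∧
    (∀ i, x i ∈ V) ∧ (∀ i, y i ∈ V) ∧
    (∀ i, x i ∈ Reach Adj (y i) ∧ x (i + 1) ∈ Reach Adj (y i)) ∧
    ∀ v ∈ V, 2 ≤ (Set.range x ∩ Reach Adj v).ncard →
      ∃ i, Set.range x ∩ Reach Adj v = {x i, x (i + 1)}

/-- `(x, y)` form a `k`-reachable-simplex in the DAG `(V, Adj)`. -/
def IsReachSimplexPair (V : Finset ℕ) (Adj : ℕ → ℕ → Prop) {k : ℕ}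
    (x y : Fin k → ℕ) : Prop :=
  Function.Injective x ∧ Function.Injective y ∧
    (∀ i, x i ∈ V) ∧ (∀ i, y i ∈ V) ∧
    (∀ i j, j ≠ i → x j ∈ Reach Adj (y i)) ∧
    ¬ ∃ v ∈ V, ∀ i, x i ∈ Reach Adj v

/-- The DAG `(V, Adj)` contains a `k`-reachable-simplex. -/
def HasReachSimplex (V : Finset ℕ) (Adj : ℕ → ℕ → Prop) (k : ℕ) : Prop :=
  ∃ x y : Fin k → ℕ, IsReachSimplexPair V Adj x y

/-- `F` is α-acyclic. -/
def IsAlphaAcyclic (F : Hypergraph') : Prop :=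
  ∃ (n : ℕ) (T : SimpleGraph (Fin n)) (f : Fin n → Finset ℕ),
    T.IsTree ∧ Function.Injective f ∧ (∀ i, f i ∈ F.edges) ∧
    (∀ e ∈ F.edges, ∃ i, f i = e) ∧
    ∀ i j b, OnPath T i j b → f i ∩ f j ⊆ f b

/-- The reachability hypergraph of the DAG `(V, Adj)`. -/
def reachHypergraph (V : Finset ℕ) (Adj : ℕ → ℕ → Prop) : Hypergraph' :=
  ⟨V, (sourcesOf V Adj).image fun s => V.filter fun v => v ∈ Reach Adj s⟩

/-- The clique completion of a hypergraph. -/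
def cliqueCompletion (H : Hypergraph') : SimpleGraph ℕ where
  Adj u v := u ≠ v ∧ ∃ e ∈ H.edges, u ∈ e ∧ v ∈ e
  symm := by
    constructor
    intro u v h
    obtain ⟨huv, e, he, hu, hv⟩ := h
    exact ⟨huv.symm, e, he, hv, hu⟩
  loopless := by
    constructor
    intro u h
    exact h.1 rfl

/-- `G` has an induced cycle on `n` vertices. -/
def HasInducedCycle (G : SimpleGraph ℕ) (n : ℕ) : Prop :=
  ∃ f : ZMod n → ℕ, Function.Injective f ∧
    ∀ i j : ZMod n, G.Adj (f i) (f j) ↔ (j = i + 1 ∨ i = j + 1)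

/-- The number of colorful homomorphisms from `H` to `G` under the coloring `c`
(with color set `{1, …, |V(H)|}`). -/
def colHomCount (G H : Hypergraph') (c : ℕ → ℕ) : ℕ :=
  Set.ncard {f : ℕ → ℕ | IsHom H G f ∧ (∀ v ∉ H.verts, f v = 0) ∧
    Set.BijOn (fun v => c (f v)) ↑H.verts ↑(Finset.Icc 1 H.verts.card)}

/-- The tensor product of hypergraphs (vertex pairs encoded by `Nat.pair`). -/
def tensor (G H : Hypergraph') : Hypergraph' :=
  ⟨(G.verts ×ˢ H.verts).image fun p => Nat.pair p.1 p.2,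
    ((G.verts ×ˢ H.verts).image fun p => Nat.pair p.1 p.2).powerset.filter fun e =>
      (e.image fun m => (Nat.unpair m).1) ∈ G.edges ∧
      (e.image fun m => (Nat.unpair m).2) ∈ H.edges⟩

/-- `Sub(G,H)`: the number of subhypergraphs of `G` isomorphic to `H`. -/
def subCount (G H : Hypergraph') : ℕ :=
  Set.ncard {p : Finset ℕ × Finset (Finset ℕ) |
    p.1 ⊆ G.verts ∧ (∀ e ∈ p.2, e ∈ G.edges ∧ e ⊆ p.1) ∧ Isomorphic H ⟨p.1, p.2⟩}

/-- Vertex renaming used in the construction of `G^H_l`: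
core vertices go to the matching vertex of the colorful hyperedge `e` of `G`,
vertices of `H'` outside the core go to their fresh copy indexed by `e`, and
vertices outside `H'` go to their unique copy. -/
def liftVert (S X : Finset ℕ) (π c : ℕ → ℕ) (e : Finset ℕ) (v : ℕ) : ℕ :=
  if v ∈ X then Nat.pair 0 ((e.filter fun u => c u = π v).sum id)
  else if v ∈ S then Nat.pair 2 (Nat.pair (Encodable.encode e) v)
  else Nat.pair 1 v

/-- The hypergraph `G^H_l` from the hardness construction. -/
def GHl (H G : Hypergraph') (S X : Finset ℕ) (Vp : ℕ → Finset ℕ) (π c : ℕ → ℕ)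
    (k : ℕ) : Hypergraph' :=
  ⟨(G.verts.image fun v => Nat.pair 0 v) ∪ ((H.verts \ S).image fun v => Nat.pair 1 v) ∪
      (Finset.range k).biUnion fun i =>
        (G.edges.filter fun e => e.card = k - 1 ∧ e.image c = (Finset.range k).erase i).biUnion
          fun e => (Vp i).image fun v => Nat.pair 2 (Nat.pair (Encodable.encode e) v),
    ((H.edges.filter fun e => e ⊆ H.verts \ S).image fun e => e.image fun v => Nat.pair 1 v) ∪
      (Finset.range k).biUnion fun i =>
        (G.edges.filter fun e => e.card = k - 1 ∧ e.image c = (Finset.range k).erase i).biUnion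
          fun e =>
            (H.edges.filter fun e' => ¬ e' ⊆ H.verts \ S ∧
                e' ⊆ X ∪ Vp i ∪ (H.verts \ S)).image
              fun e' => e'.image (liftVert S X π c e)⟩

/-- The coloring of `G^H_l`. -/
def GHlColor (π c : ℕ → ℕ) (m : ℕ) : ℕ :=
  if (Nat.unpair m).1 = 0 then c (Nat.unpair m).2
  else if (Nat.unpair m).1 = 1 then π (Nat.unpair m).2
  else π (Nat.unpair (Nat.unpair m).2).2

/-- The grouping of the vertices of `G^H_l`: copied vertices first,
then the vertices of `G`, then the vertices of `V^ext`. -/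
def GHlGroup (m : ℕ) : ℕ :=
  if (Nat.unpair m).1 = 2 then 0 else if (Nat.unpair m).1 = 0 then 1 else 2

section
namespace TreeAux

open SimpleGraph Walk

variable {n : ℕ} {T : SimpleGraph (Fin n)}

noncomputable def thePath (hT : T.IsTree) (u v : Fin n) : T.Walk u v :=
  (hT.existsUnique_path u v).exists.choose

lemma thePath_isPath (hT : T.IsTree) (u v : Fin n) : (thePath hT u v).IsPath :=
  (hT.existsUnique_path u v).exists.choose_spec

lemma eq_thePath (hT : T.IsTree) {u v : Fin n} (p : T.Walk u v) (hp : p.IsPath) :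
    p = thePath hT u v :=
  (hT.existsUnique_path u v).unique hp (thePath_isPath hT u v)

lemma onPath_iff (hT : T.IsTree) {u v b : Fin n} :
    OnPath T u v b ↔ b ∈ (thePath hT u v).support := by
  constructor
  · rintro ⟨p, hp, hb⟩; rwa [eq_thePath hT p hp] at hb
  · intro hb; exact ⟨_, thePath_isPath hT u v, hb⟩

lemma take_drop_inter {u v w x : Fin n} {p : T.Walk u v} (hp : p.IsPath)
    (hw : w ∈ p.support) (h1 : x ∈ (p.takeUntil w hw).support)
    (h2 : x ∈ (p.dropUntil w hw).support) : x = w := by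
  have hnd := hp.support_nodup
  rw [← take_spec p hw, support_append] at hnd
  obtain ⟨-, -, hdisj⟩ := List.nodup_append.mp hnd
  by_contra hne
  refine hdisj x h1 x ?_ rfl
  have := support_eq_cons (p.dropUntil w hw)
  rw [this] at h2
  rcases List.mem_cons.mp h2 with h | h
  · exact absurd h hne
  · rw [this]; simpa using h

lemma thePath_eq_cons (hT : T.IsTree) {B c i : Fin n} (hadj : T.Adj B c)
    (hc : c ∈ (thePath hT B i).support) :
    ∃ t : T.Walk c i, thePath hT B i = Walk.cons hadj t := by
  have hpath := thePath_isPath hT B i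
  have hcons : (Walk.cons hadj (Walk.nil : T.Walk c c)).IsPath := by
    rw [cons_isPath_iff]; exact ⟨IsPath.nil, by simp [hadj.ne]⟩
  have htake : (thePath hT B i).takeUntil c hc = Walk.cons hadj Walk.nil :=
    (eq_thePath hT _ (hpath.takeUntil hc)).trans (eq_thePath hT _ hcons).symm
  refine ⟨(thePath hT B i).dropUntil c hc, ?_⟩
  conv_lhs => rw [← take_spec (thePath hT B i) hc]
  rw [htake, cons_append, nil_append]

lemma child_not_mem (hT : T.IsTree) {root B c : Fin n} (hch : IsChild T root B c) :
    c ∉ (thePath hT root B).support := by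
  intro hc
  have hpath := thePath_isPath hT root B
  have htake : (thePath hT root B).takeUntil c hc = thePath hT root c :=
    eq_thePath hT _ (hpath.takeUntil hc)
  have hB1 : B ∈ ((thePath hT root B).takeUntil c hc).support := by
    rw [htake]; exact (onPath_iff hT).mp hch.2
  have hB2 : B ∈ ((thePath hT root B).dropUntil c hc).support :=
    Walk.end_mem_support _
  exact hch.1.ne (take_drop_inter hpath hc hB1 hB2)

lemma takeUntil_thePath (hT : T.IsTree) {r i B : Fin n}
    (hB : B ∈ (thePath hT r i).support) :
    (thePath hT r i).takeUntil B hB = thePath hT r B :=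
  eq_thePath hT _ ((thePath_isPath hT r i).takeUntil hB)

lemma dropUntil_thePath (hT : T.IsTree) {r i B : Fin n}
    (hB : B ∈ (thePath hT r i).support) :
    (thePath hT r i).dropUntil B hB = thePath hT B i :=
  eq_thePath hT _ ((thePath_isPath hT r i).dropUntil hB)

lemma mem_root_path_of_child (hT : T.IsTree) {root B c i : Fin n}
    (hch : IsChild T root B c) (hi : OnPath T root i c) :
    B ∈ (thePath hT root i).support := by
  have hc : c ∈ (thePath hT root i).support := (onPath_iff hT).mp hi
  have : B ∈ ((thePath hT root i).takeUntil c hc).support := by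
    rw [takeUntil_thePath hT hc]; exact (onPath_iff hT).mp hch.2
  exact support_takeUntil_subset _ hc this

/-- T3 -/
lemma onPath_parent (hT : T.IsTree) {root B c i : Fin n}
    (hch : IsChild T root B c) (hi : OnPath T root i c) : OnPath T root i B :=
  (onPath_iff hT).mpr (mem_root_path_of_child hT hch hi)

lemma child_mem_drop (hT : T.IsTree) {root B c i : Fin n}
    (hch : IsChild T root B c) (hi : OnPath T root i c) :
    c ∈ (thePath hT B i).support := by
  have hB := mem_root_path_of_child hT hch hi
  have hc : c ∈ (thePath hT root i).support := (onPath_iff hT).mp hi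
  have hnot : c ∉ ((thePath hT root i).takeUntil B hB).support := by
    rw [takeUntil_thePath hT hB]; exact child_not_mem hT hch
  have hmem : c ∈ ((thePath hT root i).dropUntil B hB).support := by
    rw [← take_spec (thePath hT root i) hB, mem_support_append_iff] at hc
    tauto
  rwa [dropUntil_thePath hT hB] at hmem

lemma child_cons (hT : T.IsTree) {root B c i : Fin n}
    (hch : IsChild T root B c) (hi : OnPath T root i c) :
    ∃ t : T.Walk c i, thePath hT B i = Walk.cons hch.1 t :=
  thePath_eq_cons hT hch.1 (child_mem_drop hT hch hi)

/-- Key disjointness: supports of the two down-paths meet only at `B`. -/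
lemma support_inter (hT : T.IsTree) {root B c c' i j : Fin n}
    (hch : IsChild T root B c) (hch' : IsChild T root B c') (hne : c ≠ c')
    (hi : OnPath T root i c) (hj : OnPath T root j c')
    {w : Fin n} (hwi : w ∈ (thePath hT B i).support)
    (hwj : w ∈ (thePath hT B j).support) : w = B := by
  by_contra hwB
  obtain ⟨t, ht⟩ := child_cons hT hch hi
  obtain ⟨t', ht'⟩ := child_cons hT hch' hj
  have hpi := thePath_isPath hT B i
  have hpj := thePath_isPath hT B j
  rw [ht, cons_isPath_iff] at hpi
  rw [ht', cons_isPath_iff] at hpj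
  have hwt : w ∈ t.support := by
    rw [ht, support_cons] at hwi
    rcases List.mem_cons.mp hwi with h | h
    · exact absurd h hwB
    · exact h
  have hwt' : w ∈ t'.support := by
    rw [ht', support_cons] at hwj
    rcases List.mem_cons.mp hwj with h | h
    · exact absurd h hwB
    · exact h
  have q1 : (Walk.cons hch.1 (t.takeUntil w hwt)).IsPath := by
    rw [cons_isPath_iff]
    exact ⟨hpi.1.takeUntil hwt, fun hB => hpi.2 (support_takeUntil_subset _ hwt hB)⟩
  have q2 : (Walk.cons hch'.1 (t'.takeUntil w hwt')).IsPath := by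
    rw [cons_isPath_iff]
    exact ⟨hpj.1.takeUntil hwt', fun hB => hpj.2 (support_takeUntil_subset _ hwt' hB)⟩
  have heq : Walk.cons hch.1 (t.takeUntil w hwt) = Walk.cons hch'.1 (t'.takeUntil w hwt') :=
    (eq_thePath hT _ q1).trans (eq_thePath hT _ q2).symm
  have hsupp := congrArg Walk.support heq
  rw [support_cons, support_cons, support_eq_cons (t.takeUntil w hwt),
    support_eq_cons (t'.takeUntil w hwt')] at hsupp
  simp only [List.cons.injEq] at hsupp
  exact hne hsupp.2.1

/-- T4 -/
lemma onPath_between (hT : T.IsTree) {root B c c' i j : Fin n}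
    (hch : IsChild T root B c) (hch' : IsChild T root B c') (hne : c ≠ c')
    (hi : OnPath T root i c) (hj : OnPath T root j c') : OnPath T i j B := by
  refine ⟨(thePath hT B i).reverse.append (thePath hT B j), ?_, ?_⟩
  · rw [isPath_def, support_append, support_reverse]
    refine List.Nodup.append (List.nodup_reverse.mpr (thePath_isPath hT B i).support_nodup) 
      ((thePath_isPath hT B j).support_nodup.tail) ?_
    intro x hx hx'
    have hxi : x ∈ (thePath hT B i).support := List.mem_reverse.mp hx
    have hxj : x ∈ (thePath hT B j).support := List.mem_of_mem_tail hx'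
    have hxB := support_inter hT hch hch' hne hi hj hxi hxj
    rw [hxB] at hx'
    have hnd := (thePath_isPath hT B j).support_nodup
    rw [support_eq_cons (thePath hT B j), List.nodup_cons] at hnd
    exact hnd.1 hx'
  · rw [mem_support_append_iff]
    exact Or.inl (by rw [support_reverse]; exact List.mem_reverse.mpr (start_mem_support _))

/-- T2 -/
lemma exists_child (hT : T.IsTree) {root B i : Fin n}
    (hB : OnPath T root i B) (hne : i ≠ B) :
    ∃ c, IsChild T root B c ∧ OnPath T root i c := by
  have hBm : B ∈ (thePath hT root i).support := (onPath_iff hT).mp hB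
  obtain ⟨c, hadj, t, hct⟩ := Walk.exists_eq_cons_of_ne (Ne.symm hne) (thePath hT B i)
  have hcdrop : c ∈ ((thePath hT root i).dropUntil B hBm).support.tail := by
    rw [dropUntil_thePath hT hBm, hct, support_cons, List.tail_cons]
    exact start_mem_support _
  have hnd := (thePath_isPath hT root i).support_nodup
  rw [← take_spec (thePath hT root i) hBm, support_append] at hnd
  obtain ⟨-, -, hdisj⟩ := List.nodup_append.mp hnd
  have hcn : c ∉ (thePath hT root B).support := by
    rw [← takeUntil_thePath hT hBm]
    intro hcc; exact hdisj c hcc c hcdrop rfl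
  refine ⟨c, ⟨hadj, ?_⟩, ?_⟩
  · -- OnPath root c B via concat
    refine ⟨(thePath hT root B).concat hadj, ?_, ?_⟩
    · rw [concat_eq_append, isPath_def, support_append]
      refine List.Nodup.append (thePath_isPath hT root B).support_nodup (by simp) ?_
      intro x hx hx'
      simp only [support_cons, List.tail_cons, support_nil, List.mem_singleton] at hx'
      subst hx'; exact hcn hx
    · rw [concat_eq_append, mem_support_append_iff]
      exact Or.inl (end_mem_support _)
  · rw [onPath_iff hT]
    rw [← take_spec (thePath hT root i) hBm, mem_support_append_iff]
    right
    exact List.mem_of_mem_tail hcdrop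

end TreeAux
end


section HyperAux

lemma trim_zero_edges (H : Hypergraph') (hH : H.Good) (S : Finset ℕ) :
    (H.trim S 0).edges = H.edges.filter (fun e => e ⊆ S) := by
  ext f
  simp only [Hypergraph'.trim, Finset.mem_image, Finset.mem_filter]
  constructor
  · rintro ⟨e, ⟨he, hcard, hne⟩, rfl⟩
    have hc0 : (e \ S).card = 0 := by exact_mod_cast le_antisymm hcard (zero_le)
    have hsub : e ⊆ S := by
      rwa [Finset.card_eq_zero, Finset.sdiff_eq_empty_iff_subset] at hc0
    rw [Finset.inter_eq_left.mpr hsub]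
    exact ⟨he, hsub⟩
  · rintro ⟨he, hsub⟩
    refine ⟨f, ⟨he, ?_, ?_⟩, Finset.inter_eq_left.mpr hsub⟩
    · rw [Finset.sdiff_eq_empty_iff_subset.mpr hsub]; simp
    · rw [Finset.inter_eq_left.mpr hsub]; exact (hH f he).2

lemma subDAH_verts (H : Hypergraph') (π : ℕ → ℕ) (l : ℕ∞) (S : Set ℕ) :
    (subDAH H π l S).verts = reachClosure H π l S :=
  Finset.inter_eq_right.mpr (Finset.filter_subset _ _)

lemma subDAH_edges (H : Hypergraph') (hH : H.Good) (π : ℕ → ℕ) (l : ℕ∞) (S : Set ℕ) :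
    (subDAH H π l S).edges = H.edges.filter (fun e => e ⊆ reachClosure H π l S) :=
  trim_zero_edges H hH _

lemma mem_reachClosure {H : Hypergraph'} {π : ℕ → ℕ} {l : ℕ∞} {S : Set ℕ} {v : ℕ} :
    v ∈ reachClosure H π l S ↔ v ∈ H.verts ∧ v ∈ ReachSet (SkelArc H π l) S :=
  Finset.mem_filter

lemma reachClosure_mono (H : Hypergraph') (π : ℕ → ℕ) (l : ℕ∞) {S S' : Set ℕ}
    (h : S ⊆ S') : reachClosure H π l S ⊆ reachClosure H π l S' := by
  intro v hv
  rw [mem_reachClosure] at hv ⊢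
  obtain ⟨h1, a, ha, hr⟩ := hv
  exact ⟨h1, a, h ha, hr⟩

lemma min_reaches {H : Hypergraph'} (hH : H.Good) {π : ℕ → ℕ} (hπ : Set.InjOn π ↑H.verts)
    (l : ℕ∞) {e : Finset ℕ} (he : e ∈ H.edges) {u : ℕ} (hu : u ∈ e)
    (hmin : ∀ w ∈ e, π u ≤ π w) {v : ℕ} (hv : v ∈ e) :
    Relation.ReflTransGen (SkelArc H π l) u v := by
  rcases eq_or_ne u v with rfl | hne
  · exact Relation.ReflTransGen.refl
  refine Relation.ReflTransGen.single ⟨e, he, hu, hv, ?_, ?_⟩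
  · rcases lt_or_eq_of_le (hmin v hv) with h | h
    · exact h
    · exact absurd (hπ ((hH e he).1 hu) ((hH e he).1 hv) h) hne
  · have hempty : e.filter (fun w => π w < π u) = ∅ := by
      rw [Finset.filter_eq_empty_iff]
      intro w hw
      exact not_lt.mpr (hmin w hw)
    simp [hempty]

/-- The abstract set of extensions, with agreement prescribed on `D`. -/
def auxSet (G H : Hypergraph') (σ π : ℕ → ℕ) (φ : ℕ → ℕ) (W D : Finset ℕ) : Set (ℕ → ℕ) :=
  {ψ | ((∀ v ∈ W, ψ v ∈ G.verts) ∧ ∀ e ∈ H.edges, e ⊆ W →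
      (e.image ψ ∈ G.edges ∧ ∀ u ∈ e, ∀ v ∈ e, π u < π v → σ (ψ u) < σ (ψ v))) ∧
    (∀ v ∉ W, ψ v = 0) ∧ ∀ v, v ∈ W → v ∈ D → ψ v = φ v}

lemma extCount_eq_aux (l : ℕ∞) (H G : Hypergraph') (hH : H.Good) (π σ : ℕ → ℕ)
    (S dom : Set ℕ) (φ : ℕ → ℕ) (D : Finset ℕ)
    (hdom : ∀ v ∈ reachClosure H π l S, (v ∈ dom ↔ v ∈ D)) :
    extCount (subDAH H π l S) π G σ dom φ
      = (auxSet G H σ π φ (reachClosure H π l S) D).ncard := by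
  unfold extCount
  congr 1
  ext ψ
  simp only [Set.mem_setOf_eq, auxSet, IsDAHHom, subDAH_verts, subDAH_edges H hH,
    Finset.mem_filter, Set.mem_inter_iff, Finset.mem_coe]
  constructor
  · rintro ⟨⟨h1, h2⟩, h3, h4⟩
    exact ⟨⟨h1, fun e he hsub => h2 e ⟨he, hsub⟩⟩, h3,
      fun v hv hD => h4 v ⟨hv, (hdom v hv).mpr hD⟩⟩
  · rintro ⟨⟨h1, h2⟩, h3, h4⟩
    exact ⟨⟨h1, fun e he => h2 e he.1 he.2⟩, h3,
      fun v hv => h4 v hv.1 ((hdom v hv.1).mp hv.2)⟩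

lemma main_aux (G H : Hypergraph') (σ π : ℕ → ℕ)
    {ι : Type} [Fintype ι] (F : Finset ι)
    (V0 VB : Finset ℕ) (Vc : ι → Finset ℕ) (φ : ℕ → ℕ)
    (hV0sub : V0 ⊆ VB) (hVcsub : ∀ c ∈ F, Vc c ⊆ VB)
    (hdecomp : ∀ v ∈ VB, v ∈ V0 ∨ ∃ c ∈ F, v ∈ Vc c)
    (hedge : ∀ e ∈ H.edges, e ⊆ VB → e ⊆ V0 ∨ ∃ c ∈ F, e ⊆ Vc c)
    (hinter : ∀ c ∈ F, ∀ c' ∈ F, c ≠ c' → ∀ v, v ∈ Vc c → v ∈ Vc c' → v ∈ V0)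
    (hφv : ∀ v ∈ V0, φ v ∈ G.verts)
    (hφe : ∀ e ∈ H.edges, e ⊆ V0 →
      e.image φ ∈ G.edges ∧ ∀ u ∈ e, ∀ v ∈ e, π u < π v → σ (φ u) < σ (φ v)) :
    (auxSet G H σ π φ VB V0).ncard = ∏ c ∈ F, (auxSet G H σ π φ (Vc c) V0).ncard := by
  classical
  set res : (ℕ → ℕ) → ι → ℕ → ℕ := fun ψ c v => if v ∈ Vc c then ψ v else 0 with hresdef
  set rec : (ι → ℕ → ℕ) → ℕ → ℕ := fun g v =>
    if v ∈ V0 then φ v else if h : ∃ c, c ∈ F ∧ v ∈ Vc c then g h.choose v else 0 with hrecdef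
  have hres_val : ∀ ψ c, ∀ v ∈ Vc c, res ψ c v = ψ v := by
    intro ψ c v hv; rw [hresdef]; exact if_pos hv
  have hres_valz : ∀ ψ c, ∀ v, v ∉ Vc c → res ψ c v = 0 := by
    intro ψ c v hv; rw [hresdef]; exact if_neg hv
  have hres_mem : ∀ ψ ∈ auxSet G H σ π φ VB V0, ∀ c ∈ F,
      res ψ c ∈ auxSet G H σ π φ (Vc c) V0 := by
    rintro ψ ⟨⟨hv, he⟩, hz, hag⟩ c hc
    refine ⟨⟨?_, ?_⟩, ?_, ?_⟩
    · intro v hv'; rw [hres_val ψ c v hv']; exact hv v (hVcsub c hc hv')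
    · intro e heH hesub
      have him : e.image (res ψ c) = e.image ψ :=
        Finset.image_congr fun x hx => hres_val ψ c x (hesub hx)
      have h2 := he e heH (hesub.trans (hVcsub c hc))
      refine ⟨him ▸ h2.1, fun u hu v hv' hlt => ?_⟩
      rw [hres_val ψ c u (hesub hu), hres_val ψ c v (hesub hv')]
      exact h2.2 u hu v hv' hlt
    · exact hres_valz ψ c
    · intro v hv' hv0; rw [hres_val ψ c v hv']; exact hag v (hV0sub hv0) hv0
  have hrec_val0 : ∀ g, ∀ v ∈ V0, rec g v = φ v := by
    intro g v hv; rw [hrecdef]; exact if_pos hv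
  have hrec_valc : ∀ g, (∀ c ∈ F, g c ∈ auxSet G H σ π φ (Vc c) V0) →
      ∀ c ∈ F, ∀ v ∈ Vc c, rec g v = g c v := by
    intro g hg c hc v hvc
    by_cases hv0 : v ∈ V0
    · rw [hrec_val0 g v hv0]
      exact ((hg c hc).2.2 v hvc hv0).symm
    · have hex : ∃ c', c' ∈ F ∧ v ∈ Vc c' := ⟨c, hc, hvc⟩
      rw [hrecdef]
      simp only [if_neg hv0, dif_pos hex]
      obtain ⟨hcF', hvc'⟩ := hex.choose_spec
      rcases eq_or_ne hex.choose c with h | h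
      · rw [h]
      · exact absurd (hinter _ hcF' c hc h v hvc' hvc) hv0
  have hrec_valz : ∀ g, ∀ v, v ∉ VB → rec g v = 0 := by
    intro g v hv
    have hv0 : v ∉ V0 := fun h => hv (hV0sub h)
    have hex : ¬ ∃ c, c ∈ F ∧ v ∈ Vc c := by
      rintro ⟨c, hc, hvc⟩; exact hv (hVcsub c hc hvc)
    rw [hrecdef]; simp only [if_neg hv0, dif_neg hex]
  have hrec_mem : ∀ g, (∀ c ∈ F, g c ∈ auxSet G H σ π φ (Vc c) V0) →
      rec g ∈ auxSet G H σ π φ VB V0 := by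
    intro g hg
    refine ⟨⟨?_, ?_⟩, ?_, ?_⟩
    · intro v hv
      rcases hdecomp v hv with h0 | ⟨c, hc, hvc⟩
      · rw [hrec_val0 g v h0]; exact hφv v h0
      · rw [hrec_valc g hg c hc v hvc]; exact (hg c hc).1.1 v hvc
    · intro e heH hesub
      rcases hedge e heH hesub with h0 | ⟨c, hc, hec⟩
      · have heq : ∀ x ∈ e, rec g x = φ x := fun x hx => hrec_val0 g x (h0 hx)
        have him : e.image (rec g) = e.image φ := Finset.image_congr fun x hx => heq x hx
        obtain ⟨h1, h2⟩ := hφe e heH h0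
        refine ⟨him ▸ h1, fun u hu v hv hlt => ?_⟩
        rw [heq u hu, heq v hv]; exact h2 u hu v hv hlt
      · have heq : ∀ x ∈ e, rec g x = g c x := fun x hx => hrec_valc g hg c hc x (hec hx)
        have him : e.image (rec g) = e.image (g c) := Finset.image_congr fun x hx => heq x hx
        obtain ⟨h1, h2⟩ := (hg c hc).1.2 e heH hec
        refine ⟨him ▸ h1, fun u hu v hv hlt => ?_⟩
        rw [heq u hu, heq v hv]; exact h2 u hu v hv hlt
    · exact hrec_valz g
    · intro v _ hv0; exact hrec_val0 g v hv0
  have hrecres : ∀ ψ ∈ auxSet G H σ π φ VB V0, ∀ g, (∀ c ∈ F, g c = res ψ c) →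
      rec g = ψ := by
    rintro ψ ⟨⟨hv, he⟩, hz, hag⟩ g hgres
    funext v
    by_cases hv0 : v ∈ V0
    · rw [hrec_val0 g v hv0]; exact (hag v (hV0sub hv0) hv0).symm
    · by_cases hex : ∃ c, c ∈ F ∧ v ∈ Vc c
      · rw [hrecdef]
        simp only [if_neg hv0, dif_pos hex]
        rw [hgres _ hex.choose_spec.1, hres_val ψ _ v hex.choose_spec.2]
      · have hvB : v ∉ VB := by
          intro hvB; rcases hdecomp v hvB with h | h
          · exact hv0 h
          · exact hex h
        rw [hrecdef]; simp only [if_neg hv0, dif_neg hex]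
        exact (hz v hvB).symm
  have hresrec : ∀ g, (∀ c ∈ F, g c ∈ auxSet G H σ π φ (Vc c) V0) →
      ∀ c ∈ F, res (rec g) c = g c := by
    intro g hg c hc
    funext v
    by_cases hvc : v ∈ Vc c
    · rw [hres_val _ c v hvc]; exact hrec_valc g hg c hc v hvc
    · rw [hres_valz _ c v hvc]; exact ((hg c hc).2.1 v hvc).symm
  classical
  have hgfun : ∀ (g : ∀ c : {x // x ∈ F}, ↥(auxSet G H σ π φ (Vc c.1) V0)),
      ∀ c ∈ F, (fun c' => if h : c' ∈ F then (g ⟨c', h⟩ : ℕ → ℕ) else 0) c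
        ∈ auxSet G H σ π φ (Vc c) V0 := by
    intro g c hc
    simp only [dif_pos hc]
    exact (g ⟨c, hc⟩).2
  let E : ↥(auxSet G H σ π φ VB V0) ≃ ∀ c : {x // x ∈ F}, ↥(auxSet G H σ π φ (Vc c.1) V0) :=
  { toFun := fun ψ c => ⟨res ψ.1 c.1, hres_mem ψ.1 ψ.2 c.1 c.2⟩
    invFun := fun g => ⟨rec (fun c' => if h : c' ∈ F then (g ⟨c', h⟩ : ℕ → ℕ) else 0),
      hrec_mem _ (hgfun g)⟩
    left_inv := by
      rintro ⟨ψ, hψ⟩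
      apply Subtype.ext
      show rec (fun c' => if h : c' ∈ F then res ψ c' else 0) = ψ
      have hg' : ∀ c ∈ F, (fun c' => if h : c' ∈ F then res ψ c' else 0) c = res ψ c :=
        fun c hc => dif_pos hc
      exact hrecres ψ hψ _ hg'
    right_inv := by
      intro g
      funext c
      apply Subtype.ext
      show res (rec (fun c' => if h : c' ∈ F then (g ⟨c', h⟩ : ℕ → ℕ) else 0)) c.1
        = (g c : ℕ → ℕ)
      rw [hresrec _ (hgfun g) c.1 c.2]
      simp only [dif_pos c.2] }
  calc (auxSet G H σ π φ VB V0).ncard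
      = Nat.card ↥(auxSet G H σ π φ VB V0) := (Nat.card_coe_set_eq _).symm
    _ = Nat.card (∀ c : {x // x ∈ F}, ↥(auxSet G H σ π φ (Vc c.1) V0)) := Nat.card_congr E
    _ = ∏ c : {x // x ∈ F}, Nat.card ↥(auxSet G H σ π φ (Vc c.1) V0) := Nat.card_pi
    _ = ∏ c : {x // x ∈ F}, (auxSet G H σ π φ (Vc c.1) V0).ncard :=
        Finset.prod_congr rfl fun c _ => Nat.card_coe_set_eq _
    _ = ∏ c ∈ F, (auxSet G H σ π φ (Vc c) V0).ncard :=
        Finset.prod_coe_sort F (fun c => (auxSet G H σ π φ (Vc c) V0).ncard)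

end HyperAux


theorem stmt4 (l : ℕ∞) (H G : Hypergraph') (hH : H.Good) (hG : G.Good)
    (π σ : ℕ → ℕ) (hπ : Set.InjOn π ↑H.verts) (hσ : Set.InjOn σ ↑G.verts)
    {n : ℕ} (T : SimpleGraph (Fin n)) (β : Fin n → Finset ℕ) (root : Fin n)
    (hT : IsDTD H.verts (SkelArc H π l) T β)
    (B : Fin n) (φ : ℕ → ℕ)
    (hφ : IsDAHHom (subDAH H π l ↑(β B)) π G σ φ) :
    extCount (subDAH H π l (GammaSet T root β B)) π G σ
        (ReachSet (SkelArc H π l) ↑(β B)) φ =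
      ∏ B' ∈ Finset.univ.filter (fun B' => IsChild T root B B'),
        extCount (subDAH H π l (GammaSet T root β B')) π G σ
          (ReachSet (SkelArc H π l) ↑(β B) ∩ ReachSet (SkelArc H π l) (GammaSet T root β B'))
          φ := by
  classical
  obtain ⟨htree, hβsrc, hβcover, hβpath⟩ := hT
  set A := SkelArc H π l with hAdef
  set V0 := reachClosure H π l (↑(β B) : Set ℕ) with hV0def
  set VB := reachClosure H π l (GammaSet T root β B) with hVBdef
  set Vc : Fin n → Finset ℕ := fun c => reachClosure H π l (GammaSet T root β c) with hVcdef
  set F := Finset.univ.filter (fun B' => IsChild T root B B') with hFdef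
  have hchild : ∀ c ∈ F, IsChild T root B c := fun c hc => (Finset.mem_filter.mp hc).2
  have hGB : (↑(β B) : Set ℕ) ⊆ GammaSet T root β B := by
    intro s hs
    exact ⟨B, (TreeAux.onPath_iff htree).mpr (SimpleGraph.Walk.end_mem_support _),
      Finset.mem_coe.mp hs⟩
  have hV0sub : V0 ⊆ VB := reachClosure_mono H π l hGB
  have hGc : ∀ c ∈ F, GammaSet T root β c ⊆ GammaSet T root β B := by
    rintro c hc s ⟨i, hOi, hsβ⟩
    exact ⟨i, TreeAux.onPath_parent htree (hchild c hc) hOi, hsβ⟩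
  have hVcsub : ∀ c ∈ F, Vc c ⊆ VB := fun c hc => reachClosure_mono H π l (hGc c hc)
  have hdecomp : ∀ v ∈ VB, v ∈ V0 ∨ ∃ c ∈ F, v ∈ Vc c := by
    intro v hv
    rw [hVBdef, mem_reachClosure] at hv
    obtain ⟨hvH, s, ⟨i, hOi, hsβ⟩, hr⟩ := hv
    by_cases hiB : i = B
    · subst hiB
      exact Or.inl (mem_reachClosure.mpr ⟨hvH, s, Finset.mem_coe.mpr hsβ, hr⟩)
    · obtain ⟨c, hch, hOc⟩ := TreeAux.exists_child htree hOi hiB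
      refine Or.inr ⟨c, Finset.mem_filter.mpr ⟨Finset.mem_univ c, hch⟩, ?_⟩
      exact mem_reachClosure.mpr ⟨hvH, s, ⟨i, hOc, hsβ⟩, hr⟩
  have hedge : ∀ e ∈ H.edges, e ⊆ VB → e ⊆ V0 ∨ ∃ c ∈ F, e ⊆ Vc c := by
    intro e he hesub
    obtain ⟨u, hu, hmin⟩ := Finset.exists_min_image e π (hH e he).2
    have huVB := hesub hu
    rw [hVBdef, mem_reachClosure] at huVB
    obtain ⟨-, s, ⟨i, hOi, hsβ⟩, hr⟩ := huVB
    have hall : ∀ v ∈ e, Relation.ReflTransGen (SkelArc H π l) s v :=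
      fun v hv => Relation.ReflTransGen.trans hr (min_reaches hH hπ l he hu hmin hv)
    by_cases hiB : i = B
    · subst hiB
      exact Or.inl fun v hv => mem_reachClosure.mpr
        ⟨(hH e he).1 hv, s, Finset.mem_coe.mpr hsβ, hall v hv⟩
    · obtain ⟨c, hch, hOc⟩ := TreeAux.exists_child htree hOi hiB
      exact Or.inr ⟨c, Finset.mem_filter.mpr ⟨Finset.mem_univ c, hch⟩,
        fun v hv => mem_reachClosure.mpr ⟨(hH e he).1 hv, s, ⟨i, hOc, hsβ⟩, hall v hv⟩⟩
  have hinter : ∀ c ∈ F, ∀ c' ∈ F, c ≠ c' → ∀ v, v ∈ Vc c → v ∈ Vc c' → v ∈ V0 := by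
    intro c hc c' hc' hne v h1 h2
    simp only [hVcdef] at h1 h2
    rw [mem_reachClosure] at h1 h2
    obtain ⟨hvH, s, ⟨i, hOi, hsβ⟩, hr⟩ := h1
    obtain ⟨-, s', ⟨j, hOj, hsβ'⟩, hr'⟩ := h2
    have hOn := TreeAux.onPath_between htree (hchild c hc) (hchild c' hc') hne hOi hOj
    have hmem := hβpath i j B hOn
      ⟨⟨s, Finset.mem_coe.mpr hsβ, hr⟩, ⟨s', Finset.mem_coe.mpr hsβ', hr'⟩⟩
    exact mem_reachClosure.mpr ⟨hvH, hmem⟩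
  have hφv : ∀ v ∈ V0, φ v ∈ G.verts := by
    intro v hv
    apply hφ.1
    rw [subDAH_verts]
    exact hv
  have hφe : ∀ e ∈ H.edges, e ⊆ V0 →
      (e.image φ ∈ G.edges ∧ ∀ u ∈ e, ∀ v ∈ e, π u < π v → σ (φ u) < σ (φ v)) := by
    intro e he hsub
    apply hφ.2
    rw [subDAH_edges H hH]
    exact Finset.mem_filter.mpr ⟨he, hsub⟩
  have hdomB : ∀ v ∈ reachClosure H π l (GammaSet T root β B),
      (v ∈ ReachSet A ↑(β B) ↔ v ∈ V0) := by
    intro v hv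
    rw [hV0def, mem_reachClosure]
    exact ⟨fun h => ⟨(mem_reachClosure.mp hv).1, h⟩, And.right⟩
  have hdomc : ∀ c ∈ F, ∀ v ∈ reachClosure H π l (GammaSet T root β c),
      (v ∈ ReachSet A ↑(β B) ∩ ReachSet A (GammaSet T root β c) ↔ v ∈ V0) := by
    intro c hc v hv
    rw [mem_reachClosure] at hv
    rw [hV0def, mem_reachClosure]
    exact ⟨fun h => ⟨hv.1, h.1⟩, fun h => ⟨h.2, hv.2⟩⟩
  calc extCount (subDAH H π l (GammaSet T root β B)) π G σ (ReachSet A ↑(β B)) φ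
      = (auxSet G H σ π φ VB V0).ncard :=
        extCount_eq_aux l H G hH π σ (GammaSet T root β B) (ReachSet A ↑(β B)) φ V0 hdomB
    _ = ∏ c ∈ F, (auxSet G H σ π φ (Vc c) V0).ncard :=
        main_aux G H σ π F V0 VB Vc φ hV0sub hVcsub hdecomp hedge hinter hφv hφe
    _ = ∏ c ∈ F, extCount (subDAH H π l (GammaSet T root β c)) π G σ
          (ReachSet A ↑(β B) ∩ ReachSet A (GammaSet T root β c)) φ :=
        Finset.prod_congr rfl fun c hc =>
          (extCount_eq_aux l H G hH π σ (GammaSet T root β c)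
            (ReachSet A ↑(β B) ∩ ReachSet A (GammaSet T root β c)) φ V0 (hdomc c hc)).symm


end
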